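/- For any r > 0 there exists a constant C ≥ 1 such that for all z, u, v ∈ T_B with β(u,v) < r one has C⁻¹ |ρ(z,v)| ≤ |ρ(z,u)| ≤ C |ρ(z,v)|, where β is the Bergman distance on T_B. -/

import Mathlib

/- We model ℂ^(n+1) (the paper's ℂⁿ with n := n+1) as (Fin n → ℂ) × ℂ,
   writing z = (z', z_n).  All occurrences of the paper's dimension `n`
   therefore become `n + 1` below. -/

noncomputable section

open MeasureTheory Complex Set

/-- The ambient space ℂ^(n+1), split as (z', z_n). -/
abbrev TubeC (n : ℕ) := (Fin n → ℂ) × ℂ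

/-- ρ(z,w) = (1/4)((z'-conj w')·(z'-conj w') - 2i(z_n - conj w_n)). -/
def rhoK {n : ℕ} (z w : TubeC n) : ℂ :=
  (1/4 : ℂ) * ((∑ j, (z.1 j - (starRingEnd ℂ) (w.1 j)) ^ 2)
    - 2 * Complex.I * (z.2 - (starRingEnd ℂ) w.2))

/-- ρ(z) = Im z_n - |Im z'|². -/
def rhoR {n : ℕ} (z : TubeC n) : ℝ := z.2.im - ∑ j, (z.1 j).im ^ 2

/-- The tube domain T_B. -/
def TB (n : ℕ) : Set (TubeC n) := {z | ∑ j, (z.1 j).im ^ 2 < z.2.im}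

/-- Inverse hyperbolic tangent. -/
def artanh (x : ℝ) : ℝ := (1/2) * Real.log ((1 + x) / (1 - x))

/-- The Bergman distance on T_B. -/
def betaB {n : ℕ} (z w : TubeC n) : ℝ :=
  artanh (Real.sqrt (1 - rhoR z * rhoR w / ‖rhoK z w‖ ^ 2))

/-- The Bergman metric ball D(z,r). -/
def DB {n : ℕ} (z : TubeC n) (r : ℝ) : Set (TubeC n) := {w ∈ TB n | betaB z w < r}

/-- Euclidean norm of a point of ℂ^(n+1). -/
def euclidNorm {n : ℕ} (z : TubeC n) : ℝ :=
  Real.sqrt ((∑ j, ‖z.1 j‖ ^ 2) + ‖z.2‖ ^ 2)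

/-- The point 𝐢 = (0', i). -/
def iPt (n : ℕ) : TubeC n := (0, Complex.I)

lemma conj_eq' (x : ℂ) : (starRingEnd ℂ) x = x - 2 * x.im * Complex.I := by
  have := Complex.sub_conj x
  push_cast at this
  linear_combination -this

lemma rhoK_conj {n : ℕ} (z w : TubeC n) : rhoK w z = (starRingEnd ℂ) (rhoK z w) := by
  simp only [rhoK, map_mul, map_sub, map_sum, map_pow, map_div₀, map_one, map_ofNat,
    Complex.conj_I, Complex.conj_conj]
  rw [Finset.sum_congr rfl (fun j _ => show ((w.1 j - (starRingEnd ℂ) (z.1 j))^2 : ℂ)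
    = ((starRingEnd ℂ) (z.1 j) - w.1 j)^2 from by ring)]
  ring

lemma re_rhoK {n : ℕ} (z w : TubeC n) :
    (rhoK z w).re = (1/4) * (∑ j, (((z.1 j).re - (w.1 j).re)^2 + ((z.1 j).im - (w.1 j).im)^2))
      + (1/2) * (rhoR z + rhoR w) := by
  have hsum : ∀ (a b c d : Fin n → ℝ),
      ∑ j, ((a j - b j) * (a j - b j) - (c j - -(d j)) * (c j - -(d j)))
      = ∑ j, ((a j - b j) * (a j - b j) + (c j - d j) * (c j - d j))
        - 2 * ∑ j, c j * c j - 2 * ∑ j, d j * d j := by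
    intro a b c d
    rw [Finset.mul_sum, Finset.mul_sum, ← Finset.sum_sub_distrib, ← Finset.sum_sub_distrib]
    exact Finset.sum_congr rfl fun j _ => by ring
  rw [rhoK]
  rw [show (1/4:ℂ) = ((1/4:ℝ):ℂ) by norm_num, Complex.re_ofReal_mul]
  simp only [Complex.sub_re, Complex.re_sum, pow_two, Complex.mul_re, Complex.sub_im,
    Complex.conj_re, Complex.conj_im, Complex.mul_im, Complex.I_re, Complex.I_im,
    Complex.re_ofNat, Complex.im_ofNat, rhoR]
  linear_combination (1/4) * hsum (fun j => (z.1 j).re) (fun j => (w.1 j).re)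
    (fun j => (z.1 j).im) (fun j => (w.1 j).im)

lemma rhoK_identity {n : ℕ} (z u v : TubeC n) :
    rhoK z u = rhoK z v + rhoK v u - ((rhoR v : ℝ) : ℂ)
      + (1/2) * ∑ j, (z.1 j - v.1 j) * ((starRingEnd ℂ) (v.1 j) - (starRingEnd ℂ) (u.1 j)) := by
  have hterm : ∀ j, (z.1 j - (starRingEnd ℂ) (u.1 j))^2
      = (z.1 j - (starRingEnd ℂ) (v.1 j))^2 + (v.1 j - (starRingEnd ℂ) (u.1 j))^2
        + 4 * (((v.1 j).im : ℂ))^2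
        + 2 * ((z.1 j - v.1 j) * ((starRingEnd ℂ) (v.1 j) - (starRingEnd ℂ) (u.1 j))) := by
    intro j
    rw [conj_eq' (v.1 j)]
    linear_combination (-4 * ((v.1 j).im : ℂ)^2) * Complex.I_sq
  have hsum := Finset.sum_congr rfl (fun j (_ : j ∈ Finset.univ) => hterm j)
  rw [rhoK, rhoK, rhoK, hsum]
  rw [Finset.sum_add_distrib, Finset.sum_add_distrib, Finset.sum_add_distrib]
  have hcast : ((rhoR v : ℝ) : ℂ) = (v.2.im : ℂ) - ∑ j, ((v.1 j).im : ℂ)^2 := by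
    rw [rhoR]; push_cast; ring
  rw [hcast, conj_eq' v.2]
  rw [← Finset.mul_sum, ← Finset.mul_sum]
  linear_combination ((v.2.im : ℝ) : ℂ) * Complex.I_sq

lemma rhoR_pos {n : ℕ} {z : TubeC n} (hz : z ∈ TB n) : 0 < rhoR z := sub_pos.mpr hz

lemma half_le_re {n : ℕ} (z w : TubeC n) :
    (1/2) * (rhoR z + rhoR w) ≤ (rhoK z w).re := by
  rw [re_rhoK]
  have h : (0:ℝ) ≤ ∑ j, (((z.1 j).re - (w.1 j).re)^2 + ((z.1 j).im - (w.1 j).im)^2) :=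
    Finset.sum_nonneg fun j _ => by positivity
  linarith

lemma sum_sq_abs_le {n : ℕ} (z w : TubeC n) (hz : z ∈ TB n) (hw : w ∈ TB n) :
    ∑ j, ‖z.1 j - w.1 j‖ ^ 2 ≤ 4 * (rhoK z w).re := by
  have h : ∑ j, ‖z.1 j - w.1 j‖^2
      = ∑ j, (((z.1 j).re - (w.1 j).re)^2 + ((z.1 j).im - (w.1 j).im)^2) := by
    refine Finset.sum_congr rfl fun j _ => ?_
    rw [Complex.sq_norm, Complex.normSq_apply, Complex.sub_re, Complex.sub_im]; ring
  rw [h, re_rhoK]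
  have h1 := rhoR_pos hz
  have h2 := rhoR_pos hw
  linarith

lemma re_le_abs' (w : ℂ) : w.re ≤ ‖w‖ := Complex.re_le_norm w

lemma cross_bound {n : ℕ} (z u v : TubeC n) (hz : z ∈ TB n) (hu : u ∈ TB n) (hv : v ∈ TB n) :
    ‖(1/2 : ℂ) * ∑ j, (z.1 j - v.1 j) * ((starRingEnd ℂ) (v.1 j) - (starRingEnd ℂ) (u.1 j))‖
      ≤ ‖rhoK z v‖ + ‖rhoK v u‖ := by
  set A := ‖rhoK z v‖ with hA
  set B := ‖rhoK v u‖ with hB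
  have hA0 : 0 ≤ A := norm_nonneg _
  have hB0 : 0 ≤ B := norm_nonneg _
  set S := ∑ j, ‖z.1 j - v.1 j‖ * ‖v.1 j - u.1 j‖ with hS
  have hS0 : 0 ≤ S := Finset.sum_nonneg fun j _ => by positivity
  have habs : ‖(1/2 : ℂ) * ∑ j, (z.1 j - v.1 j) * ((starRingEnd ℂ) (v.1 j) - (starRingEnd ℂ) (u.1 j))‖
      ≤ (1/2) * S := by
    rw [norm_mul]
    have h1 : ‖(1/2 : ℂ)‖ = 1/2 := by simp
    rw [h1]
    have h2 : ‖∑ j, (z.1 j - v.1 j) * ((starRingEnd ℂ) (v.1 j) - (starRingEnd ℂ) (u.1 j))‖ ≤ S := by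
      refine (norm_sum_le _ _).trans (le_of_eq (Finset.sum_congr rfl fun j _ => ?_))
      rw [norm_mul]
      congr 1
      rw [show (starRingEnd ℂ) (v.1 j) - (starRingEnd ℂ) (u.1 j) = (starRingEnd ℂ) (v.1 j - u.1 j) by rw [map_sub]]
      exact Complex.norm_conj _
    linarith
  have hCS : S^2 ≤ (∑ j, ‖z.1 j - v.1 j‖^2) * (∑ j, ‖v.1 j - u.1 j‖^2) :=
    Finset.sum_mul_sq_le_sq_mul_sq _ _ _
  have h3 : ∑ j, ‖z.1 j - v.1 j‖^2 ≤ 4 * A := by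
    refine (sum_sq_abs_le z v hz hv).trans ?_
    have := re_le_abs' (rhoK z v); linarith
  have h4 : ∑ j, ‖v.1 j - u.1 j‖^2 ≤ 4 * B := by
    refine (sum_sq_abs_le v u hv hu).trans ?_
    have := re_le_abs' (rhoK v u); linarith
  have hP0 : (0:ℝ) ≤ ∑ j, ‖z.1 j - v.1 j‖^2 := Finset.sum_nonneg fun j _ => by positivity
  have hQ0 : (0:ℝ) ≤ ∑ j, ‖v.1 j - u.1 j‖^2 := Finset.sum_nonneg fun j _ => by positivity
  have hS2 : S^2 ≤ 16 * A * B := by nlinarith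
  have ht2 : S^2 ≤ (2*(A+B))^2 := by nlinarith [sq_nonneg (A-B)]
  have hSle : S ≤ 2 * (A + B) := by
    have := Real.sqrt_le_sqrt ht2
    rwa [Real.sqrt_sq hS0, Real.sqrt_sq (by linarith)] at this
  linarith

lemma abs_rhoK_comm {n : ℕ} (z w : TubeC n) : ‖rhoK z w‖ = ‖rhoK w z‖ := by
  rw [rhoK_conj z w, Complex.norm_conj]

lemma sqrt_le_re {n : ℕ} (z w : TubeC n) (hz : z ∈ TB n) (hw : w ∈ TB n) :
    rhoR z * rhoR w ≤ ‖rhoK z w‖ ^ 2 := by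
  have h1 := half_le_re z w
  have h2 := re_le_abs' (rhoK z w)
  have h3 := rhoR_pos hz
  have h4 := rhoR_pos hw
  nlinarith [sq_nonneg (rhoR z - rhoR w)]

lemma main_half {n : ℕ} (K : ℝ) (hK : 1 ≤ K) (z u v : TubeC n)
    (hz : z ∈ TB n) (hu : u ∈ TB n) (hv : v ∈ TB n)
    (huv : ‖rhoK u v‖ ^ 2 ≤ K * (rhoR u * rhoR v)) :
    ‖rhoK z u‖ ≤ (4 + 8 * K) * ‖rhoK z v‖ := by
  set A := ‖rhoK z v‖ with hA
  set B := ‖rhoK v u‖ with hB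
  have hA0 : 0 ≤ A := norm_nonneg _
  have hB0 : 0 ≤ B := norm_nonneg _
  have hru := rhoR_pos hu
  have hrv := rhoR_pos hv
  have hrz := rhoR_pos hz
  -- rhoR v ≤ 2 * A
  have hv2A : rhoR v ≤ 2 * A := by
    have h1 := half_le_re z v
    have h2 := re_le_abs' (rhoK z v)
    linarith
  -- rhoR u ≤ 4 K rhoR v
  have huV : rhoR u ≤ 4 * K * rhoR v := by
    have h1 := half_le_re u v
    have h2 := re_le_abs' (rhoK u v)
    nlinarith [norm_nonneg (rhoK u v)]
  -- B ≤ 2 K rhoR v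
  have hB2 : B ≤ 2 * K * rhoR v := by
    have hBuv : B = ‖rhoK u v‖ := abs_rhoK_comm v u
    have h2 : ‖rhoK u v‖ ^ 2 ≤ 4 * K^2 * rhoR v ^ 2 := by nlinarith
    rw [hBuv]
    nlinarith [norm_nonneg (rhoK u v), mul_pos hrv (by linarith : (0:ℝ) < K)]
  -- triangle
  have htri : ‖rhoK z u‖ ≤ A + B + rhoR v + (A + B) := by
    rw [rhoK_identity z u v]
    refine le_trans (norm_add_le _ _) ?_
    have h1 : ‖rhoK z v + rhoK v u - ((rhoR v : ℝ):ℂ)‖ ≤ A + B + rhoR v := by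
      rw [sub_eq_add_neg]
      refine le_trans (norm_add_le _ _) ?_
      have h0 := norm_add_le (rhoK z v) (rhoK v u)
      have habsr : ‖-((rhoR v : ℝ):ℂ)‖ = rhoR v := by
        rw [norm_neg, Complex.norm_of_nonneg hrv.le]
      rw [habsr]
      linarith
    have h2 := cross_bound z u v hz hu hv
    linarith
  nlinarith [mul_le_mul_of_nonneg_left hv2A (by linarith : (0:ℝ) ≤ 2*K)]

lemma beta_extract {n : ℕ} {r : ℝ} (hr : 0 < r) {u v : TubeC n} (hu : u ∈ TB n) (hv : v ∈ TB n)
    (h : betaB u v < r) :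
    ‖rhoK u v‖ ^ 2
      ≤ ((Real.exp (2*r) + 1)^2 / (4 * Real.exp (2*r))) * (rhoR u * rhoR v) := by
  set E := Real.exp (2*r) with hE
  have hE1 : 1 < E := by
    rw [hE]
    calc (1:ℝ) = Real.exp 0 := Real.exp_zero.symm
    _ < Real.exp (2*r) := Real.exp_lt_exp.mpr (by linarith)
  have hru := rhoR_pos hu
  have hrv := rhoR_pos hv
  have hP : 0 < rhoR u * rhoR v := mul_pos hru hrv
  have hle := sqrt_le_re u v hu hv
  have ha2 : 0 < ‖rhoK u v‖ ^ 2 := lt_of_lt_of_le hP hle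
  set a := ‖rhoK u v‖ ^ 2 with haa
  set t := rhoR u * rhoR v / a with htt
  have ht0 : 0 < t := div_pos hP ha2
  have ht1 : t ≤ 1 := by rw [htt, div_le_one ha2]; exact hle
  set x := Real.sqrt (1 - t) with hxx
  have hx0 : 0 ≤ x := Real.sqrt_nonneg _
  have hx1 : x < 1 := by
    rw [hxx]
    calc Real.sqrt (1 - t) < Real.sqrt 1 := by
          apply Real.sqrt_lt_sqrt (by linarith) (by linarith)
    _ = 1 := Real.sqrt_one
  have hx2 : x^2 = 1 - t := Real.sq_sqrt (by linarith)
  have hb : artanh x < r := h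
  have hq : (0:ℝ) < (1 + x) / (1 - x) := div_pos (by linarith) (by linarith)
  have hlog : Real.log ((1 + x) / (1 - x)) < 2*r := by
    rw [artanh] at hb; linarith
  have hqE : (1 + x) / (1 - x) < E := (Real.log_lt_iff_lt_exp hq).mp hlog
  have hxm : x * (E + 1) < E - 1 := by
    rw [div_lt_iff₀ (by linarith : (0:ℝ) < 1 - x)] at hqE
    nlinarith
  have hxlt : x < (E - 1) / (E + 1) := by
    rw [lt_div_iff₀ (by linarith : (0:ℝ) < E + 1)]; exact hxm
  have hm0 : 0 ≤ (E - 1) / (E + 1) := div_nonneg (by linarith) (by linarith)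
  have hx2lt : 1 - t < (E - 1)^2 / (E + 1)^2 := by
    rw [← hx2, ← div_pow]
    exact pow_lt_pow_left₀ hxlt hx0 (by norm_num)
  have htgt : 4*E / (E+1)^2 < t := by
    have hEp : (0:ℝ) < (E+1)^2 := by positivity
    rw [div_lt_iff₀ hEp]
    rw [lt_div_iff₀ hEp] at hx2lt
    nlinarith
  have key : 4*E*a < (E+1)^2 * (rhoR u * rhoR v) := by
    rw [div_lt_iff₀ (by positivity : (0:ℝ) < (E+1)^2)] at htgt
    have h6 := mul_lt_mul_of_pos_right htgt ha2
    have h7 : t * (E+1)^2 * a = (E+1)^2 * (rhoR u * rhoR v) := by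
      rw [htt]; field_simp
    linarith
  rw [div_mul_eq_mul_div, le_div_iff₀ (by positivity : (0:ℝ) < 4*E)]
  nlinarith

/-- |ρ(z,u)| ≃ |ρ(z,v)| when β(u,v) < r. -/
theorem stmt_7 (n : ℕ) (r : ℝ) (hr : 0 < r) :
    ∃ C : ℝ, 1 ≤ C ∧ ∀ z ∈ TB n, ∀ u ∈ TB n, ∀ v ∈ TB n, betaB u v < r →
      C⁻¹ * ‖rhoK z v‖ ≤ ‖rhoK z u‖ ∧
      ‖rhoK z u‖ ≤ C * ‖rhoK z v‖ := by
  set E := Real.exp (2*r) with hE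
  have hE1 : 1 < E := by
    rw [hE]
    calc (1:ℝ) = Real.exp 0 := Real.exp_zero.symm
    _ < Real.exp (2*r) := Real.exp_lt_exp.mpr (by linarith)
  set K := (E + 1)^2 / (4 * E) with hKdef
  have hK1 : 1 ≤ K := by
    rw [hKdef, le_div_iff₀ (by positivity : (0:ℝ) < 4*E)]
    nlinarith [sq_nonneg (E - 1)]
  refine ⟨4 + 8*K, by linarith, ?_⟩
  intro z hz u hu v hv hbeta
  have hCpos : (0:ℝ) < 4 + 8*K := by linarith
  have huv : ‖rhoK u v‖ ^ 2 ≤ K * (rhoR u * rhoR v) := beta_extract hr hu hv hbeta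
  have hvu : ‖rhoK v u‖ ^ 2 ≤ K * (rhoR v * rhoR u) := by
    rw [abs_rhoK_comm v u, mul_comm (rhoR v)]; exact huv
  have hupper := main_half K hK1 z u v hz hu hv huv
  have hlower := main_half K hK1 z v u hz hv hu hvu
  constructor
  · calc (4 + 8*K)⁻¹ * ‖rhoK z v‖
        ≤ (4 + 8*K)⁻¹ * ((4 + 8*K) * ‖rhoK z u‖) := by
          apply mul_le_mul_of_nonneg_left hlower (by positivity)
    _ = ‖rhoK z u‖ := by field_simp
  · exact hupper
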